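/- If L is 1-homogenous to L' (same widths with identical total heights per width), then OPT_FSP(L) = OPT_FSP(L'). -/

import Mathlib

/-- A rectangle is a pair (width, height). A packing of list `L` into the
width-1 strip at height `H`: axis-parallel placements, no overlap. -/
structure StripPacking (L : List (ℝ × ℝ)) (H : ℝ) where
  pos : Fin L.length → ℝ × ℝ
  left : ∀ i, 0 ≤ (pos i).1
  right : ∀ i, (pos i).1 + (L.get i).1 ≤ 1
  bottom : ∀ i, 0 ≤ (pos i).2
  top : ∀ i, (pos i).2 + (L.get i).2 ≤ H
  disjoint : ∀ i j, i ≠ j →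
    (pos i).1 + (L.get i).1 ≤ (pos j).1 ∨ (pos j).1 + (L.get j).1 ≤ (pos i).1 ∨
    (pos i).2 + (L.get i).2 ≤ (pos j).2 ∨ (pos j).2 + (L.get j).2 ≤ (pos i).2

/-- `L'` is obtained from `L` by horizontal cuts: each rectangle `(w,h)` is
replaced by `(w,h₁),…,(w,h_k)` with `h = h₁+⋯+h_k`, all pieces positive. -/
def IsSubdivision (L L' : List (ℝ × ℝ)) : Prop :=
  ∃ css : List (List ℝ), css.length = L.length ∧
    (∀ p ∈ L.zip css, p.2.sum = p.1.2 ∧ ∀ hh ∈ p.2, 0 < hh) ∧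
    L' = (L.zip css).flatMap (fun p => p.2.map fun hh => (p.1.1, hh))

/-- Optimal fractional strip packing height of `L`. -/
noncomputable def OPTFSP (L : List (ℝ × ℝ)) : ℝ :=
  sInf {H | 0 ≤ H ∧ ∃ L', IsSubdivision L L' ∧ Nonempty (StripPacking L' H)}

/-- Total height of rectangles of width `w` in `L`. -/
noncomputable def heightAt (L : List (ℝ × ℝ)) (w : ℝ) : ℝ :=
  ((L.filter (fun R => R.1 = w)).map Prod.snd).sum

/-- `L` is `r`-homogenous to `L'`: both lists use widths from a common finite
set `W`, and for each `w ∈ W` the total height in `L` lies between the total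
height in `L'` and `r` times it. -/
def Homogenous (r : ℝ) (L L' : List (ℝ × ℝ)) : Prop :=
  ∃ W : Finset ℝ, (∀ R ∈ L, R.1 ∈ W) ∧ (∀ R ∈ L', R.1 ∈ W) ∧
    ∀ w ∈ W, heightAt L' w ≤ heightAt L w ∧ heightAt L w ≤ r * heightAt L' w



namespace FSPAux


lemma sum_take_mono {l : List ℝ} (h0 : ∀ x ∈ l, 0 ≤ x) {m n : ℕ} (hmn : m ≤ n) :
    (l.take m).sum ≤ (l.take n).sum := by
  have h : l.take n = l.take m ++ (l.drop m).take (n - m) := by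
    rw [← List.take_add]; congr 1; omega
  rw [h, List.sum_append]
  have : 0 ≤ ((l.drop m).take (n - m)).sum :=
    List.sum_nonneg fun x hx => h0 x (List.drop_subset _ _ (List.take_subset _ _ hx))
  linarith

lemma sum_take_le_sum {l : List ℝ} (h0 : ∀ x ∈ l, 0 ≤ x) (m : ℕ) :
    (l.take m).sum ≤ l.sum := by
  rw [← List.sum_take_add_sum_drop l m]
  have : 0 ≤ (l.drop m).sum := List.sum_nonneg fun x hx => h0 x (List.drop_subset _ _ hx)
  linarith

lemma heightAt_nil (w : ℝ) : heightAt [] w = 0 := rfl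

lemma heightAt_cons (R : ℝ × ℝ) (T : List (ℝ × ℝ)) (w : ℝ) :
    heightAt (R :: T) w = (if R.1 = w then R.2 else 0) + heightAt T w := by
  unfold heightAt
  by_cases hw : R.1 = w <;> simp [List.filter_cons, hw]

lemma heightAt_append (A B : List (ℝ × ℝ)) (w : ℝ) :
    heightAt (A ++ B) w = heightAt A w + heightAt B w := by
  unfold heightAt
  rw [List.filter_append, List.map_append, List.sum_append]

lemma heightAt_pos_of_mem {L : List (ℝ × ℝ)} {w h : ℝ} (hm : (w, h) ∈ L)
    (hpos : ∀ R ∈ L, 0 < R.2) : 0 < heightAt L w := by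
  unfold heightAt
  apply List.sum_pos
  · intro x hx
    simp only [List.mem_map] at hx
    obtain ⟨R, hR, rfl⟩ := hx
    exact hpos R (List.mem_of_mem_filter hR)
  · have : (w, h) ∈ L.filter (fun R => R.1 = w) := by
      rw [List.mem_filter]; exact ⟨hm, by simp⟩
    simp only [ne_eq, List.map_eq_nil_iff]
    intro hnil
    rw [hnil] at this; simp at this

lemma heightAt_eq_zero {L : List (ℝ × ℝ)} {w : ℝ} (h : ∀ R ∈ L, R.1 ≠ w) :
    heightAt L w = 0 := by
  unfold heightAt
  have : L.filter (fun R => R.1 = w) = [] := by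
    rw [List.filter_eq_nil_iff]
    intro R hR
    simpa using h R hR
  rw [this]; simp

lemma heightAt_map_const (cs : List ℝ) (w' w : ℝ) :
    heightAt (cs.map fun x => (w', x)) w = if w' = w then cs.sum else 0 := by
  induction cs with
  | nil => simp [heightAt_nil]
  | cons c cst ih =>
    simp only [List.map_cons, heightAt_cons, ih]
    by_cases hw : w' = w <;> simp [hw]

inductive Subdiv : List (ℝ × ℝ) → List (ℝ × ℝ) → Prop where
  | nil : Subdiv [] []
  | cons (w h : ℝ) (cs : List ℝ) {L M : List (ℝ × ℝ)} (hsum : cs.sum = h)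
      (hpos : ∀ x ∈ cs, 0 < x) (hs : Subdiv L M) :
      Subdiv ((w, h) :: L) ((cs.map fun x => (w, x)) ++ M)

lemma Subdiv.isSubdivision {L M : List (ℝ × ℝ)} (s : Subdiv L M) : IsSubdivision L M := by
  induction s with
  | nil => exact ⟨[], rfl, by simp, by simp⟩
  | cons w h cs hsum hpos hs ih =>
    obtain ⟨css, hlen, hcond, hM⟩ := ih
    refine ⟨cs :: css, by simp [hlen], ?_, ?_⟩
    · intro p hp
      rw [List.zip_cons_cons, List.mem_cons] at hp
      rcases hp with rfl | hp
      · exact ⟨hsum, hpos⟩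
      · exact hcond p hp
    · rw [List.zip_cons_cons, List.flatMap_cons, ← hM]

lemma isSubdivision_subdiv : ∀ {L M : List (ℝ × ℝ)}, IsSubdivision L M → Subdiv L M := by
  intro L
  induction L with
  | nil =>
    rintro M ⟨css, hlen, hcond, rfl⟩
    simpa using Subdiv.nil
  | cons R T ih =>
    rintro M ⟨css, hlen, hcond, rfl⟩
    cases css with
    | nil => simp at hlen
    | cons c cs' =>
      rw [List.zip_cons_cons, List.flatMap_cons]
      obtain ⟨w, h⟩ := R
      have h1 := hcond (⟨(w, h), c⟩) (by rw [List.zip_cons_cons]; exact List.mem_cons_self)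
      exact Subdiv.cons w h c h1.1 h1.2
        (ih ⟨cs', by simpa using hlen, fun p hp => hcond p (by rw [List.zip_cons_cons]; exact List.mem_cons_of_mem _ hp), rfl⟩)

lemma Subdiv.heightAt_eq {L M : List (ℝ × ℝ)} (s : Subdiv L M) (w : ℝ) :
    heightAt M w = heightAt L w := by
  induction s with
  | nil => rfl
  | cons w' h cs hsum hpos hs ih =>
    rw [heightAt_append, heightAt_cons, ih]
    congr 1
    rw [heightAt_map_const]
    by_cases hw : w' = w <;> simp [hw, hsum]

lemma Subdiv.pos_heights {L M : List (ℝ × ℝ)} (s : Subdiv L M) :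
    ∀ R ∈ M, 0 < R.2 := by
  induction s with
  | nil => simp
  | cons w h cs hsum hpos hs ih =>
    intro R hR
    rw [List.mem_append] at hR
    rcases hR with hR | hR
    · obtain ⟨x, hx, rfl⟩ := List.mem_map.1 hR
      exact hpos x hx
    · exact ih R hR



lemma Subdiv.refl {L : List (ℝ × ℝ)} (h : ∀ R ∈ L, 0 < R.2) : Subdiv L L := by
  induction L with
  | nil => exact Subdiv.nil
  | cons R T ih =>
    have := Subdiv.cons R.1 R.2 [R.2] (by simp) (by simpa using h R (List.mem_cons_self))
      (ih fun S hS => h S (List.mem_cons_of_mem _ hS))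
    simpa using this

lemma Subdiv.append {L₁ M₁ L₂ M₂ : List (ℝ × ℝ)} (s₁ : Subdiv L₁ M₁) (s₂ : Subdiv L₂ M₂) :
    Subdiv (L₁ ++ L₂) (M₁ ++ M₂) := by
  induction s₁ with
  | nil => simpa using s₂
  | cons w h cs hsum hpos hs ih =>
    have := Subdiv.cons w h cs hsum hpos ih
    simpa [List.append_assoc] using this

lemma Subdiv.cons_inv {w h : ℝ} {L M : List (ℝ × ℝ)} (s : Subdiv ((w, h) :: L) M) :
    ∃ (cs : List ℝ) (M' : List (ℝ × ℝ)), cs.sum = h ∧ (∀ x ∈ cs, 0 < x) ∧ Subdiv L M' ∧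
      M = (cs.map fun x => (w, x)) ++ M' := by
  cases s with
  | cons _ _ cs hsum hpos hs => exact ⟨cs, _, hsum, hpos, hs, rfl⟩

lemma Subdiv.append_inv : ∀ {L₁ L₂ M : List (ℝ × ℝ)}, Subdiv (L₁ ++ L₂) M →
    ∃ M₁ M₂, M = M₁ ++ M₂ ∧ Subdiv L₁ M₁ ∧ Subdiv L₂ M₂ := by
  intro L₁
  induction L₁ with
  | nil => intro L₂ M s; exact ⟨[], M, rfl, Subdiv.nil, by simpa using s⟩
  | cons R T ih =>
    intro L₂ M s
    obtain ⟨w, h⟩ := R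
    rw [List.cons_append] at s
    obtain ⟨cs, M', hsum, hpos, hs', rfl⟩ := s.cons_inv
    obtain ⟨M₁, M₂, rfl, s₁, s₂⟩ := ih hs'
    exact ⟨(cs.map fun x => (w, x)) ++ M₁, M₂, by rw [List.append_assoc],
      Subdiv.cons w h cs hsum hpos s₁, s₂⟩

/-- The key common-refinement lemma. -/
lemma key2 : ∀ (n : ℕ) (A B : List (ℝ × ℝ)), A.length + B.length ≤ n →
    (∀ R ∈ A, 0 < R.2) → (∀ R ∈ B, 0 < R.2) →
    (∀ w, heightAt A w = heightAt B w) →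
    ∃ A₂ B₂, Subdiv A A₂ ∧ Subdiv B B₂ ∧ A₂.Perm B₂ := by
  intro n
  induction n with
  | zero =>
    intro A B hlen _ _ _
    have hA : A = [] := by cases A <;> simp_all
    have hB : B = [] := by cases B <;> simp_all
    subst hA; subst hB
    exact ⟨[], [], Subdiv.nil, Subdiv.nil, List.Perm.refl _⟩
  | succ n ih =>
    intro A B hlen hApos hBpos hheights
    cases A with
    | nil =>
      have hB : B = [] := by
        by_contra hB
        obtain ⟨b, hb⟩ := List.exists_mem_of_ne_nil B hB
        have h1 : 0 < heightAt B b.1 := heightAt_pos_of_mem (by simpa using hb) hBpos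
        have h2 := hheights b.1
        rw [heightAt_nil] at h2
        linarith
      subst hB
      exact ⟨[], [], Subdiv.nil, Subdiv.nil, List.Perm.refl _⟩
    | cons R A' =>
      obtain ⟨w, h⟩ := R
      have hh : 0 < h := by simpa using hApos (w, h) (List.mem_cons_self)
      -- find an element of width w in B
      have hBw : 0 < heightAt B w := by
        rw [← hheights w]
        exact heightAt_pos_of_mem (List.mem_cons_self) hApos
      have : ∃ k, (w, k) ∈ B := by
        by_contra hc
        push_neg at hc
        have : heightAt B w = 0 := by
          apply heightAt_eq_zero
          intro S hS hSw
          have hS' : (S.1, S.2) ∈ B := by simpa using hS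
          rw [hSw] at hS'
          exact hc S.2 hS'
        linarith
      obtain ⟨k, hk⟩ := this
      obtain ⟨B₁, B₂, rfl⟩ := List.append_of_mem hk
      have hkpos : 0 < k := by simpa using hBpos (w, k) hk
      have hA'pos : ∀ R ∈ A', 0 < R.2 := fun S hS => hApos S (List.mem_cons_of_mem _ hS)
      have hB₁pos : ∀ R ∈ B₁, 0 < R.2 := fun S hS => hBpos S (by simp [hS])
      have hB₂pos : ∀ R ∈ B₂, 0 < R.2 := fun S hS => hBpos S (by simp [hS])
      have hlen' : A'.length + (B₁.length + B₂.length) + 1 + 1 ≤ n + 1 := by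
        simpa [List.length_append, Nat.add_comm, Nat.add_assoc, Nat.add_left_comm] using hlen
      have hhw : ∀ w', ((if w = w' then h else 0) + heightAt A' w')
          = heightAt B₁ w' + ((if w = w' then k else 0) + heightAt B₂ w') := by
        intro w'
        have := hheights w'
        rw [heightAt_cons, heightAt_append, heightAt_cons] at this
        simpa using this
      rcases lt_trichotomy h k with hlt | heq | hgt
      · -- h < k : recurse on A', B₁ ++ (w, k-h) :: B₂
        have hrec := ih A' (B₁ ++ (w, k - h) :: B₂)
          (by simp only [List.length_append, List.length_cons]; omega)
          hA'pos
          (by intro S hS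
              rcases List.mem_append.1 hS with hS | hS
              · exact hB₁pos S hS
              · rcases List.mem_cons.1 hS with rfl | hS
                · simpa using sub_pos.2 hlt
                · exact hB₂pos S hS)
          (by intro w'
              have := hhw w'
              rw [heightAt_append, heightAt_cons]
              by_cases hww : w = w' <;> simp [hww] at this ⊢ <;> linarith)
        obtain ⟨A₂', B₂N, sA, sB, hperm⟩ := hrec
        obtain ⟨M₁, M₂, rfl, sB₁, sB₂⟩ := sB.append_inv
        obtain ⟨cs, M₃, hcssum, hcspos, sB₃, rfl⟩ := sB₂.cons_inv
        refine ⟨(w, h) :: A₂', M₁ ++ ((h :: cs).map fun x => (w, x)) ++ M₃, ?_, ?_, ?_⟩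
        · have := Subdiv.cons w h [h] (by simp) (by simpa using hh) sA
          simpa using this
        · have : Subdiv ((w, k) :: B₂) (((h :: cs).map fun x => (w, x)) ++ M₃) :=
            Subdiv.cons w k (h :: cs) (by simp [hcssum])
              (by intro x hx; rcases List.mem_cons.1 hx with rfl | hx
                  · exact hh
                  · exact hcspos x hx) sB₃
          have := sB₁.append this
          simpa [List.append_assoc] using this
        · have h2 : M₁ ++ ((h :: cs).map fun x => (w, x)) ++ M₃
              = M₁ ++ (w, h) :: ((cs.map fun x => (w, x)) ++ M₃) := by simp
          rw [h2]
          have h3 : A₂'.Perm (M₁ ++ ((cs.map fun x => (w, x)) ++ M₃)) := by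
            simpa [List.append_assoc] using hperm
          exact (h3.cons _).trans List.perm_middle.symm
      · -- h = k : recurse on A', B₁ ++ B₂
        subst heq
        have hrec := ih A' (B₁ ++ B₂)
          (by simp only [List.length_append]; omega)
          hA'pos
          (by intro S hS
              rcases List.mem_append.1 hS with hS | hS
              · exact hB₁pos S hS
              · exact hB₂pos S hS)
          (by intro w'
              have := hhw w'
              rw [heightAt_append]
              by_cases hww : w = w' <;> simp [hww] at this ⊢ <;> linarith)
        obtain ⟨A₂', B₂N, sA, sB, hperm⟩ := hrec
        obtain ⟨M₁, M₂, rfl, sB₁, sB₂⟩ := sB.append_inv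
        refine ⟨(w, h) :: A₂', M₁ ++ ((w, h) :: M₂), ?_, ?_, ?_⟩
        · have := Subdiv.cons w h [h] (by simp) (by simpa using hh) sA
          simpa using this
        · have : Subdiv ((w, h) :: B₂) ((w, h) :: M₂) := by
            have := Subdiv.cons w h [h] (by simp) (by simpa using hh) sB₂
            simpa using this
          exact sB₁.append this
        · exact (hperm.cons _).trans List.perm_middle.symm
      · -- k < h : recurse on (w, h - k) :: A', B₁ ++ B₂
        have hrec := ih ((w, h - k) :: A') (B₁ ++ B₂)
          (by simp only [List.length_append, List.length_cons]; omega)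
          (by intro S hS
              rcases List.mem_cons.1 hS with rfl | hS
              · simpa using sub_pos.2 hgt
              · exact hA'pos S hS)
          (by intro S hS
              rcases List.mem_append.1 hS with hS | hS
              · exact hB₁pos S hS
              · exact hB₂pos S hS)
          (by intro w'
              have := hhw w'
              rw [heightAt_append, heightAt_cons]
              by_cases hww : w = w' <;> simp [hww] at this ⊢ <;> linarith)
        obtain ⟨A₂', B₂N, sA, sB, hperm⟩ := hrec
        obtain ⟨cs, M, hcssum, hcspos, sA', rfl⟩ := sA.cons_inv
        obtain ⟨M₁, M₂, rfl, sB₁, sB₂⟩ := sB.append_inv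
        refine ⟨((k :: cs).map fun x => (w, x)) ++ M, M₁ ++ ((w, k) :: M₂), ?_, ?_, ?_⟩
        · exact Subdiv.cons w h (k :: cs) (by simp [hcssum])
            (by intro x hx; rcases List.mem_cons.1 hx with rfl | hx
                · exact hkpos
                · exact hcspos x hx) sA'
        · have : Subdiv ((w, k) :: B₂) ((w, k) :: M₂) := by
            have := Subdiv.cons w k [k] (by simp) (by simpa using hkpos) sB₂
            simpa using this
          exact sB₁.append this
        · have h1 : ((k :: cs).map fun x => (w, x)) ++ M
              = (w, k) :: ((cs.map fun x => (w, x)) ++ M) := by simp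
          rw [h1]
          exact (hperm.cons _).trans List.perm_middle.symm

lemma perm_getEquiv {α : Type*} : ∀ {l l' : List α}, l.Perm l' →
    ∃ e : Fin l.length ≃ Fin l'.length, ∀ i, l.get i = l'.get (e i) := by
  intro l l' p
  induction p with
  | nil => exact ⟨Equiv.refl _, fun i => i.elim0⟩
  | cons x p ih =>
    obtain ⟨e, he⟩ := ih
    refine ⟨(finSuccEquiv _).trans ((Equiv.optionCongr e).trans (finSuccEquiv _).symm), ?_⟩
    intro i
    refine Fin.cases ?_ ?_ i
    · simp
    · intro j
      simpa using he j
  | swap x y l =>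
    refine ⟨Equiv.swap ⟨0, by simp⟩ ⟨1, by simp⟩, ?_⟩
    intro i
    rcases i with ⟨i, hi⟩
    match i with
    | 0 => simp [Equiv.swap_apply_def, Fin.ext_iff]
    | 1 => simp [Equiv.swap_apply_def, Fin.ext_iff]
    | (m + 2) => simp [Equiv.swap_apply_def, Fin.ext_iff]
  | trans p₁ p₂ ih₁ ih₂ =>
    obtain ⟨e₁, he₁⟩ := ih₁
    obtain ⟨e₂, he₂⟩ := ih₂
    exact ⟨e₁.trans e₂, fun i => (he₁ i).trans (he₂ (e₁ i))⟩

/-- Packing transfers along permutations. -/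
lemma packing_of_perm {M N : List (ℝ × ℝ)} {H : ℝ} (p : M.Perm N)
    (P : StripPacking N H) : Nonempty (StripPacking M H) := by
  obtain ⟨e, he⟩ := perm_getEquiv p
  exact ⟨{
      pos := fun i => P.pos (e i)
      left := fun i => P.left (e i)
      right := fun i => by rw [he i]; exact P.right (e i)
      bottom := fun i => P.bottom (e i)
      top := fun i => by rw [he i]; exact P.top (e i)
      disjoint := fun i j hij => by
        rw [he i, he j]
        exact P.disjoint (e i) (e j) (fun hc => hij (e.injective hc)) }⟩

/-- Packing transfers along subdivisions (stack the pieces inside the parent). -/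
lemma pack_subdiv {H : ℝ} : ∀ {L M : List (ℝ × ℝ)}, Subdiv L M →
    ∀ P : StripPacking L H, ∃ Q : StripPacking M H,
      ∀ j : Fin M.length, ∃ i : Fin L.length,
        (Q.pos j).1 = (P.pos i).1 ∧ (M.get j).1 = (L.get i).1 ∧
        (P.pos i).2 ≤ (Q.pos j).2 ∧
        (Q.pos j).2 + (M.get j).2 ≤ (P.pos i).2 + (L.get i).2 := by
  intro L M s
  induction s with
  | nil =>
    intro P
    exact ⟨⟨fun j => j.elim0, fun j => j.elim0, fun j => j.elim0, fun j => j.elim0,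
      fun j => j.elim0, fun j => j.elim0⟩, fun j => j.elim0⟩
  | @cons w h cs L M hsum hpos s ih =>
    intro P
    -- the tail packing
    set P₀ : StripPacking L H :=
      { pos := fun i => P.pos i.succ
        left := fun i => P.left i.succ
        right := fun i => by have := P.right i.succ; simpa using this
        bottom := fun i => P.bottom i.succ
        top := fun i => by have := P.top i.succ; simpa using this
        disjoint := fun i j hij => by
          have := P.disjoint i.succ j.succ (by simpa [Fin.succ_inj] using hij)
          simpa using this } with hP₀def
    have hP₀pos : ∀ i, P₀.pos i = P.pos i.succ := fun i => by rw [hP₀def]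
    obtain ⟨Q₀, hQ₀⟩ := ih P₀
    set N : List (ℝ × ℝ) := (cs.map fun x => (w, x)) ++ M with hN
    have hi0 : (0 : ℕ) < ((w, h) :: L).length := by simp
    set z := P.pos ⟨0, hi0⟩ with hz
    have hget0 : (((w, h) :: L).get ⟨0, hi0⟩) = (w, h) := rfl
    have hnn : ∀ x ∈ cs, 0 ≤ x := fun x hx => le_of_lt (hpos x hx)
    have hSnn : ∀ t : ℕ, 0 ≤ (cs.take t).sum :=
      fun t => List.sum_nonneg fun x hx => hnn x (List.take_subset _ _ hx)
    have hSh : ∀ t : ℕ, (cs.take t).sum ≤ h := fun t => hsum ▸ sum_take_le_sum hnn t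
    have hSsucc : ∀ t : ℕ, (ht : t < cs.length) →
        (cs.take (t + 1)).sum = (cs.take t).sum + cs[t] := fun t ht =>
      List.sum_take_succ _ _ ht
    have hlenN : N.length = cs.length + M.length := by simp [hN]
    -- index helpers
    have hMidx : ∀ j : Fin N.length, ¬ ((j : ℕ) < cs.length) →
        (j : ℕ) - cs.length < M.length := by
      intro j hj
      have hjl : (j : ℕ) < cs.length + M.length := by rw [← hlenN]; exact j.isLt
      omega
    have hgetPiece : ∀ (j : Fin N.length) (hj : (j : ℕ) < cs.length),
        N.get j = (w, cs[(j : ℕ)]) := by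
      intro j hj
      simp only [List.get_eq_getElem, hN]
      rw [List.getElem_append_left (by simpa using hj), List.getElem_map]
    have hgetM : ∀ (j : Fin N.length) (hj : ¬ ((j : ℕ) < cs.length)),
        N.get j = M.get ⟨(j : ℕ) - cs.length, hMidx j hj⟩ := by
      intro j hj
      simp only [List.get_eq_getElem, hN]
      rw [List.getElem_append_right (by simpa using hj)]
      simp
    -- positions
    set pos' : Fin N.length → ℝ × ℝ := fun j =>
      if hj : (j : ℕ) < cs.length then (z.1, z.2 + (cs.take (j : ℕ)).sum)
      else Q₀.pos ⟨(j : ℕ) - cs.length, hMidx j hj⟩ with hpos'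
    have hposPiece : ∀ (j : Fin N.length), (j : ℕ) < cs.length →
        pos' j = (z.1, z.2 + (cs.take (j : ℕ)).sum) := by
      intro j hj; simp only [hpos', dif_pos hj]
    have hposM : ∀ (j : Fin N.length) (hj : ¬ ((j : ℕ) < cs.length)),
        pos' j = Q₀.pos ⟨(j : ℕ) - cs.length, hMidx j hj⟩ := by
      intro j hj; simp only [hpos', dif_neg hj]
    -- containment data for M-pieces, relative to P
    have hQ₀' : ∀ (j : Fin N.length) (hj : ¬ ((j : ℕ) < cs.length)),
        ∃ i : Fin L.length,
          (pos' j).1 = (P.pos i.succ).1 ∧ (N.get j).1 = (L.get i).1 ∧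
          (P.pos i.succ).2 ≤ (pos' j).2 ∧
          (pos' j).2 + (N.get j).2 ≤ (P.pos i.succ).2 + (L.get i).2 := by
      intro j hj
      obtain ⟨i, h1, h2, h3, h4⟩ := hQ₀ ⟨(j : ℕ) - cs.length, hMidx j hj⟩
      rw [hP₀pos] at h1 h3 h4
      rw [← hposM j hj] at h1 h3 h4
      rw [← hgetM j hj] at h2 h4
      exact ⟨i, h1, h2, h3, h4⟩
    -- key disjointness between a cs-piece and an M-piece
    have hkey : ∀ (j j' : Fin N.length), (j : ℕ) < cs.length → ¬ ((j' : ℕ) < cs.length) →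
        (pos' j).1 + (N.get j).1 ≤ (pos' j').1 ∨
        (pos' j').1 + (N.get j').1 ≤ (pos' j).1 ∨
        (pos' j).2 + (N.get j).2 ≤ (pos' j').2 ∨
        (pos' j').2 + (N.get j').2 ≤ (pos' j).2 := by
      intro j j' hj hj'
      obtain ⟨i, h1, h2, h3, h4⟩ := hQ₀' j' hj'
      have hne : (⟨0, hi0⟩ : Fin (((w, h) :: L).length)) ≠ i.succ :=
        fun hc => (Fin.succ_ne_zero i) hc.symm
      have hd := P.disjoint ⟨0, hi0⟩ i.succ hne
      rw [hget0] at hd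
      rw [← hz] at hd
      have hgetsucc : (((w, h) :: L).get i.succ) = L.get i := by simp
      rw [hgetsucc] at hd
      rw [hposPiece j hj, hgetPiece j hj]
      have hcsle : (cs.take (j : ℕ)).sum + cs[(j : ℕ)] ≤ h := by
        have e1 := hSsucc (j : ℕ) hj
        have e2 := hSh ((j : ℕ) + 1)
        linarith
      have hS0 : 0 ≤ (cs.take (j : ℕ)).sum := hSnn _
      rcases hd with hd | hd | hd | hd
      · left
        rw [h1]
        exact hd
      · right; left
        rw [h1, h2]
        exact hd
      · right; right; left
        have hd3 : z.2 + h ≤ (P.pos i.succ).2 := hd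
        have : z.2 + (cs.take (j : ℕ)).sum + cs[(j : ℕ)] ≤ (pos' j').2 := by linarith
        exact this
      · right; right; right
        have hd4 : (P.pos i.succ).2 + (L.get i).2 ≤ z.2 := hd
        have : (pos' j').2 + (N.get j').2 ≤ z.2 + (cs.take (j : ℕ)).sum := by linarith
        exact this
    refine ⟨⟨pos', ?_, ?_, ?_, ?_, ?_⟩, ?_⟩
    · -- left
      intro j
      by_cases hj : (j : ℕ) < cs.length
      · rw [hposPiece j hj]; exact P.left ⟨0, hi0⟩
      · rw [hposM j hj]; exact Q₀.left _
    · -- right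
      intro j
      by_cases hj : (j : ℕ) < cs.length
      · rw [hposPiece j hj, hgetPiece j hj]
        have := P.right ⟨0, hi0⟩
        rw [hget0] at this
        rw [← hz] at this
        simpa using this
      · rw [hposM j hj, hgetM j hj]
        exact Q₀.right _
    · -- bottom
      intro j
      by_cases hj : (j : ℕ) < cs.length
      · rw [hposPiece j hj]
        have hb := P.bottom ⟨0, hi0⟩
        rw [← hz] at hb
        have := hSnn (j : ℕ)
        simpa using add_nonneg hb this
      · rw [hposM j hj]; exact Q₀.bottom _
    · -- top
      intro j
      by_cases hj : (j : ℕ) < cs.length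
      · rw [hposPiece j hj, hgetPiece j hj]
        have h1 := P.top ⟨0, hi0⟩
        rw [hget0] at h1
        rw [← hz] at h1
        have h2 := hSsucc (j : ℕ) hj
        have h3 := hSh ((j : ℕ) + 1)
        simp only [Prod.snd] at h1 ⊢
        simp at h1 ⊢
        linarith
      · rw [hposM j hj, hgetM j hj]
        exact Q₀.top _
    · -- disjoint
      intro j j' hne
      by_cases hj : (j : ℕ) < cs.length <;> by_cases hj' : (j' : ℕ) < cs.length
      · -- both pieces
        have hnat : (j : ℕ) ≠ (j' : ℕ) := fun hc => hne (Fin.ext hc)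
        rw [hposPiece j hj, hposPiece j' hj', hgetPiece j hj, hgetPiece j' hj']
        rcases Nat.lt_or_ge (j : ℕ) (j' : ℕ) with hlt | hge
        · right; right; left
          have h2 := hSsucc (j : ℕ) hj
          have h3 := sum_take_mono hnn (show _ + 1 ≤ _ from hlt)
          show z.2 + (cs.take (j : ℕ)).sum + cs[(j : ℕ)] ≤ z.2 + (cs.take (j' : ℕ)).sum
          linarith
        · have hlt : (j' : ℕ) < (j : ℕ) := by omega
          right; right; right
          have h2 := hSsucc (j' : ℕ) hj'
          have h3 := sum_take_mono hnn (show _ + 1 ≤ _ from hlt)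
          simp
          linarith
      · exact hkey j j' hj hj'
      · have := hkey j' j hj' hj
        tauto
      · -- both in M
        have hne' : (⟨(j : ℕ) - cs.length, hMidx j hj⟩ : Fin M.length)
            ≠ ⟨(j' : ℕ) - cs.length, hMidx j' hj'⟩ := by
          intro hc
          apply hne
          apply Fin.ext
          have h1 : (j : ℕ) - cs.length = (j' : ℕ) - cs.length := by
            simpa using hc
          have := j.isLt
          have := j'.isLt
          omega
        rw [hposM j hj, hposM j' hj', hgetM j hj, hgetM j' hj']
        exact Q₀.disjoint _ _ hne'
    · -- containment
      intro j
      by_cases hj : (j : ℕ) < cs.length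
      · refine ⟨⟨0, hi0⟩, ?_, ?_, ?_, ?_⟩
        · show (pos' j).1 = _
          rw [hposPiece j hj, ← hz]
        · show (N.get j).1 = _
          rw [hgetPiece j hj, hget0]
        · show _ ≤ (pos' j).2
          rw [hposPiece j hj, ← hz]
          exact le_add_of_nonneg_right (hSnn _)
        · show (pos' j).2 + (N.get j).2 ≤ _
          rw [hposPiece j hj, hgetPiece j hj, hget0, ← hz]
          have e2 := hSsucc (j : ℕ) hj
          have e3 := hSh ((j : ℕ) + 1)
          have : z.2 + (cs.take (j : ℕ)).sum + cs[(j : ℕ)] ≤ z.2 + h := by linarith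
          exact this
      · obtain ⟨i, h1, h2, h3, h4⟩ := hQ₀' j hj
        refine ⟨i.succ, ?_, ?_, ?_, ?_⟩
        · show (pos' j).1 = _
          exact h1
        · show (N.get j).1 = _
          rw [h2]; simp
        · show _ ≤ (pos' j).2
          exact h3
        · show (pos' j).2 + (N.get j).2 ≤ _
          have hgs : (((w, h) :: L).get i.succ) = L.get i := by simp
          rw [hgs]; exact h4

/-- The trivial stacked packing. -/
lemma trivial_packing (L : List (ℝ × ℝ)) (hL : ∀ R ∈ L, R.1 ≤ 1 ∧ 0 ≤ R.2) :
    Nonempty (StripPacking L ((L.map Prod.snd).sum)) := by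
  have hnn : ∀ x ∈ L.map Prod.snd, 0 ≤ x := by
    intro x hx
    obtain ⟨R, hR, rfl⟩ := List.mem_map.1 hx
    exact (hL R hR).2
  have hgetsnd : ∀ i : Fin L.length, (L.map Prod.snd)[(i : ℕ)]'(by simpa using i.isLt)
      = L[(i : ℕ)].2 := by
    intro i
    rw [List.getElem_map]
  have hstep : ∀ k : Fin L.length, ((L.map Prod.snd).take ((k : ℕ) + 1)).sum
      = ((L.map Prod.snd).take (k : ℕ)).sum + L[(k : ℕ)].2 := by
    intro k
    rw [List.sum_take_succ _ _ (by simpa using k.isLt), hgetsnd]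
  refine ⟨⟨fun i => (0, ((L.map Prod.snd).take (i : ℕ)).sum), fun i => le_refl 0,
    ?_, ?_, ?_, ?_⟩⟩
  · intro i
    have := (hL (L.get i) (L.get_mem i)).1
    simpa using this
  · intro i
    exact List.sum_nonneg fun x hx => hnn x (List.take_subset _ _ hx)
  · intro i
    have h2 := sum_take_le_sum hnn ((i : ℕ) + 1)
    have h4 := hstep i
    simp only [Prod.snd]
    simp
    linarith
  · intro i j hne
    have hnat : (i : ℕ) ≠ (j : ℕ) := fun hc => hne (Fin.ext hc)
    rcases Nat.lt_or_ge (i : ℕ) (j : ℕ) with hlt | hge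
    · right; right; left
      have h3 := sum_take_mono hnn (show _ + 1 ≤ _ from hlt)
      have h4 := hstep i
      simp
      linarith
    · have hlt : (j : ℕ) < (i : ℕ) := by omega
      right; right; right
      have h3 := sum_take_mono hnn (show _ + 1 ≤ _ from hlt)
      have h4 := hstep j
      simp
      linarith


lemma OPTFSP_le {L L' : List (ℝ × ℝ)}
    (hrect : ∀ R ∈ L, 0 < R.1 ∧ R.1 ≤ 1 ∧ 0 < R.2)
    (hrect' : ∀ R ∈ L', 0 < R.1 ∧ R.1 ≤ 1 ∧ 0 < R.2)
    (hEq : ∀ w, heightAt L w = heightAt L' w) :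
    OPTFSP L ≤ OPTFSP L' := by
  unfold OPTFSP
  apply csInf_le_csInf
  · exact ⟨0, fun x hx => hx.1⟩
  · refine ⟨(L'.map Prod.snd).sum, ?_, L',
      (Subdiv.refl (fun R hR => (hrect' R hR).2.2)).isSubdivision,
      trivial_packing L' (fun R hR => ⟨(hrect' R hR).2.1, le_of_lt (hrect' R hR).2.2⟩)⟩
    exact List.sum_nonneg fun x hx => by
      obtain ⟨R, hR, rfl⟩ := List.mem_map.1 hx
      exact le_of_lt (hrect' R hR).2.2
  · rintro H ⟨hH0, L'', hsub, ⟨P⟩⟩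
    have s'' := isSubdivision_subdiv hsub
    have hEq'' : ∀ w, heightAt L w = heightAt L'' w :=
      fun w => (hEq w).trans (s''.heightAt_eq w).symm
    obtain ⟨A₂, B₂, sA, sB, hperm⟩ := key2 (L.length + L''.length) L L'' le_rfl
      (fun R hR => (hrect R hR).2.2) s''.pos_heights hEq''
    obtain ⟨Q, -⟩ := pack_subdiv sB P
    obtain ⟨Q'⟩ := packing_of_perm hperm Q
    exact ⟨hH0, A₂, sA.isSubdivision, ⟨Q'⟩⟩

end FSPAux

/-- If `L` is `1`-homogenous to `L'` (same widths, identical total heights per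
width), then `OPT_FSP(L) = OPT_FSP(L')`. -/
theorem fsp_one_homogenous (L L' : List (ℝ × ℝ))
    (hrect : ∀ R ∈ L, 0 < R.1 ∧ R.1 ≤ 1 ∧ 0 < R.2)
    (hrect' : ∀ R ∈ L', 0 < R.1 ∧ R.1 ≤ 1 ∧ 0 < R.2)
    (hhom : Homogenous 1 L L') :
    OPTFSP L = OPTFSP L' := by
  obtain ⟨W, hW, hW', hww⟩ := hhom
  have hEq : ∀ w, heightAt L w = heightAt L' w := by
    intro w
    by_cases hw : w ∈ W
    · have h1 := hww w hw
      rw [one_mul] at h1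
      linarith [h1.1, h1.2]
    · have hz1 : ∀ R ∈ L, R.1 ≠ w := by
        intro R hR hc
        rw [← hc] at hw
        exact hw (hW R hR)
      have hz2 : ∀ R ∈ L', R.1 ≠ w := by
        intro R hR hc
        rw [← hc] at hw
        exact hw (hW' R hR)
      rw [FSPAux.heightAt_eq_zero hz1, FSPAux.heightAt_eq_zero hz2]
  exact le_antisymm (FSPAux.OPTFSP_le hrect hrect' hEq)
    (FSPAux.OPTFSP_le hrect' hrect fun w => (hEq w).symm)
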